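/- For an integer s ≥ 2, the single zeta value ζ(s) equals the iterated integral ∫_{1 > t₁ > t₂ > … > t_s > 0} (dt₁/t₁)(dt₂/t₂)⋯(dt_{s-1}/t_{s-1})(dt_s/(1-t_s)); that is, ζ(s) = ∫_{Δ} Π_{i=1}^{s-1} (1/t_i) · (1/(1-t_s)) dt₁⋯dt_s where Δ = {(t₁,…,t_s) : 1 > t₁ > … > t_s > 0}. -/

import Mathlib

open MeasureTheory Set

namespace ZetaIterAux

/-- The open simplex `x > t 0 > t 1 > ... > 0`. -/
def S (s : ℕ) (x : ℝ) : Set (Fin s → ℝ) :=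
  {t | (∀ i, 0 < t i) ∧ (∀ i j : Fin s, i < j → t j < t i) ∧ (∀ i, t i < x)}

lemma measurableSet_S (s : ℕ) (x : ℝ) : MeasurableSet (S s x) := by
  have h1 : MeasurableSet {t : Fin s → ℝ | ∀ i, 0 < t i} := by
    rw [Set.setOf_forall]
    exact MeasurableSet.iInter fun i =>
      measurableSet_lt measurable_const (measurable_pi_apply i)
  have h2 : MeasurableSet {t : Fin s → ℝ | ∀ i j : Fin s, i < j → t j < t i} := by
    rw [Set.setOf_forall]
    refine MeasurableSet.iInter fun i => ?_
    rw [Set.setOf_forall]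
    refine MeasurableSet.iInter fun j => ?_
    by_cases h : i < j
    · simp only [h, forall_true_left]
      exact measurableSet_lt (measurable_pi_apply j) (measurable_pi_apply i)
    · simp [h]
  have h3 : MeasurableSet {t : Fin s → ℝ | ∀ i, t i < x} := by
    rw [Set.setOf_forall]
    exact MeasurableSet.iInter fun i =>
      measurableSet_lt (measurable_pi_apply i) measurable_const
  have : S s x = {t : Fin s → ℝ | ∀ i, 0 < t i} ∩
      ({t | ∀ i j : Fin s, i < j → t j < t i} ∩ {t | ∀ i, t i < x}) := rfl
  rw [this]
  exact h1.inter (h2.inter h3)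

lemma measurable_integrand (s : ℕ) (c : Fin s) (n : ℕ) :
    Measurable fun t : Fin s → ℝ =>
      ENNReal.ofReal ((∏ i, (t i)⁻¹) * t c ^ (n + 1)) := by
  apply ENNReal.measurable_ofReal.comp
  exact (Finset.measurable_prod _ fun i _ => (measurable_pi_apply i).inv).mul
    ((measurable_pi_apply c).pow_const _)

/-- One-dimensional computation. -/
lemma lint_Ioo (x : ℝ) (hx : 0 < x) (n : ℕ) (c : ℝ) (hc : 0 ≤ c) :
    ∫⁻ a in Ioo (0 : ℝ) x, ENNReal.ofReal (a ^ n * c) =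
      ENNReal.ofReal (x ^ (n + 1) / ((n : ℝ) + 1) * c) := by
  rw [← ofReal_integral_eq_lintegral_ofReal]
  · congr 1
    rw [← MeasureTheory.integral_Ioc_eq_integral_Ioo,
      ← intervalIntegral.integral_of_le hx.le,
      intervalIntegral.integral_mul_const, integral_pow]
    simp
  · exact (((continuous_pow n).mul continuous_const).integrableOn_Icc).mono_set
      Ioo_subset_Icc_self
  · refine ae_restrict_of_forall_mem measurableSet_Ioo fun a ha => ?_
    exact mul_nonneg (pow_nonneg ha.1.le n) hc

lemma cons_mem_S {m : ℕ} {x a : ℝ} {y : Fin (m + 1) → ℝ} :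
    Fin.cons a y ∈ S (m + 2) x ↔ (a ∈ Ioo (0 : ℝ) x ∧ y ∈ S (m + 1) a) := by
  constructor
  · rintro ⟨hpos, hdec, hlt⟩
    have ha0 : (0 : ℝ) < a := by simpa using hpos 0
    have hax : a < x := by simpa using hlt 0
    refine ⟨⟨ha0, hax⟩, fun i => by simpa using hpos i.succ, ?_, ?_⟩
    · intro i j hij
      have := hdec i.succ j.succ (by simpa [Fin.succ_lt_succ_iff] using hij)
      simpa using this
    · intro i
      have := hdec 0 i.succ (Fin.succ_pos i)
      simpa using this
  · rintro ⟨⟨ha0, hax⟩, hy0, hydec, hya⟩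
    refine ⟨?_, ?_, ?_⟩
    · intro i
      refine Fin.cases ?_ ?_ i
      · simpa using ha0
      · intro j; simpa using hy0 j
    · intro i j hij
      rcases Fin.eq_zero_or_eq_succ j with rfl | ⟨j', rfl⟩
      · exact absurd hij (Fin.not_lt_zero i)
      · rcases Fin.eq_zero_or_eq_succ i with rfl | ⟨i', rfl⟩
        · simpa using hya j'
        · have : i' < j' := Fin.succ_lt_succ_iff.mp hij
          simpa using hydec i' j' this
    · intro i
      refine Fin.cases ?_ ?_ i
      · simpa using hax
      · intro j; simpa using (hya j).trans hax

lemma key : ∀ (m : ℕ) (x : ℝ), 0 < x → ∀ n : ℕ,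
    (∫⁻ t in S (m + 1) x,
        ENNReal.ofReal ((∏ i, (t i)⁻¹) * t (Fin.last m) ^ (n + 1))) =
      ENNReal.ofReal (x ^ (n + 1) / ((n : ℝ) + 1) ^ (m + 1)) := by
  intro m
  induction m with
  | zero =>
    intro x hx n
    rw [← lintegral_indicator (measurableSet_S 1 x)]
    have hmp : MeasurePreserving (MeasurableEquiv.funUnique (Fin 1) ℝ).symm volume volume :=
      MeasurePreserving.symm _ (volume_preserving_funUnique (Fin 1) ℝ)
    rw [← hmp.lintegral_comp_emb (MeasurableEquiv.measurableEmbedding _)]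
    have hpt : ∀ a : ℝ,
        (S 1 x).indicator
            (fun t => ENNReal.ofReal ((∏ i, (t i)⁻¹) * t (Fin.last 0) ^ (n + 1)))
            ((MeasurableEquiv.funUnique (Fin 1) ℝ).symm a) =
          (Ioo (0 : ℝ) x).indicator (fun a => ENNReal.ofReal (a ^ n * 1)) a := by
      intro a
      have he : (MeasurableEquiv.funUnique (Fin 1) ℝ).symm a = fun _ : Fin 1 => a := rfl
      rw [he]
      have hmem : (fun _ : Fin 1 => a) ∈ S 1 x ↔ a ∈ Ioo (0 : ℝ) x := by
        constructor
        · rintro ⟨h1, _, h3⟩; exact ⟨h1 0, h3 0⟩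
        · rintro ⟨h1, h2⟩
          exact ⟨fun _ => h1, fun i j hij => absurd (Subsingleton.elim i j ▸ hij)
            (lt_irrefl j), fun _ => h2⟩
      by_cases ha : a ∈ Ioo (0 : ℝ) x
      · rw [Set.indicator_of_mem (hmem.mpr ha), Set.indicator_of_mem ha]
        congr 1
        have ha0 : a ≠ 0 := ne_of_gt ha.1
        simp only [Finset.univ_unique, Finset.prod_singleton]
        field_simp
        ring
      · rw [Set.indicator_of_notMem (fun h => ha (hmem.mp h)),
          Set.indicator_of_notMem ha]
    rw [lintegral_congr hpt, lintegral_indicator measurableSet_Ioo,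
      lint_Ioo x hx n 1 zero_le_one]
    norm_num
  | succ m IH =>
    intro x hx n
    set c : ℝ := 1 / ((n : ℝ) + 1) ^ (m + 1) with hc
    have hc0 : 0 ≤ c := by positivity
    set e := MeasurableEquiv.piFinSuccAbove (fun _ : Fin (m + 2) => ℝ) 0 with he
    set F : (Fin (m + 2) → ℝ) → ENNReal := fun t =>
      ENNReal.ofReal ((∏ i, (t i)⁻¹) * t (Fin.last (m + 1)) ^ (n + 1)) with hF
    have hsymm : ∀ a (y : Fin (m + 1) → ℝ), e.symm (a, y) = Fin.cons a y := by
      intro a y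
      simp [he, MeasurableEquiv.piFinSuccAbove_symm_apply, Fin.consEquiv]
    rw [← lintegral_indicator (measurableSet_S (m + 2) x)]
    have hmp : MeasurePreserving e.symm volume volume :=
      MeasurePreserving.symm _ (volume_preserving_piFinSuccAbove (fun _ : Fin (m + 2) => ℝ) 0)
    rw [← hmp.lintegral_comp_emb (MeasurableEquiv.measurableEmbedding _)]
    rw [show (volume : Measure (ℝ × (Fin (m + 1) → ℝ))) = Measure.prod volume volume from
      Measure.volume_eq_prod ℝ (Fin (m + 1) → ℝ)]
    have hmeasz : Measurable fun z : ℝ × (Fin (m + 1) → ℝ) =>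
        (S (m + 2) x).indicator F (e.symm z) :=
      ((measurable_integrand (m + 2) (Fin.last (m + 1)) n).indicator
        (measurableSet_S (m + 2) x)).comp e.symm.measurable
    rw [lintegral_prod _ hmeasz.aemeasurable]
    have hout : ∀ a : ℝ,
        (∫⁻ y : Fin (m + 1) → ℝ, (S (m + 2) x).indicator F (e.symm (a, y))) =
          (Ioo (0 : ℝ) x).indicator (fun a => ENNReal.ofReal (a ^ n * c)) a := by
      intro a
      by_cases ha : a ∈ Ioo (0 : ℝ) x
      · have hin : ∀ y : Fin (m + 1) → ℝ,
            (S (m + 2) x).indicator F (e.symm (a, y)) =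
              (S (m + 1) a).indicator (fun y => ENNReal.ofReal a⁻¹ *
                ENNReal.ofReal ((∏ i, (y i)⁻¹) * y (Fin.last m) ^ (n + 1))) y := by
          intro y
          rw [hsymm]
          by_cases hy : y ∈ S (m + 1) a
          · rw [Set.indicator_of_mem (cons_mem_S.mpr ⟨ha, hy⟩), Set.indicator_of_mem hy]
            have hFval : F (Fin.cons a y) =
                ENNReal.ofReal (a⁻¹ * ((∏ i, (y i)⁻¹) * y (Fin.last m) ^ (n + 1))) := by
              have h3 : (Fin.cons a y : Fin (m + 2) → ℝ) (Fin.last (m + 1)) =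
                  y (Fin.last m) := by
                rw [← Fin.succ_last, Fin.cons_succ]
              simp only [hF, Fin.prod_univ_succ, Fin.cons_zero, Fin.cons_succ, h3]
              congr 1
              ring
            rw [hFval, ENNReal.ofReal_mul (inv_nonneg.mpr ha.1.le)]
          · rw [Set.indicator_of_notMem (fun h => hy (cons_mem_S.mp h).2),
              Set.indicator_of_notMem hy]
        rw [lintegral_congr hin, lintegral_indicator (measurableSet_S (m + 1) a),
          lintegral_const_mul' _ _ ENNReal.ofReal_ne_top, IH a ha.1 n,
          Set.indicator_of_mem ha, ← ENNReal.ofReal_mul (inv_nonneg.mpr ha.1.le)]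
        congr 1
        have ha0 : a ≠ 0 := ne_of_gt ha.1
        rw [hc, pow_succ]
        field_simp
      · have hin : ∀ y : Fin (m + 1) → ℝ,
            (S (m + 2) x).indicator F (e.symm (a, y)) = 0 := by
          intro y
          rw [hsymm]
          exact Set.indicator_of_notMem (fun h => ha (cons_mem_S.mp h).1) _
        rw [lintegral_congr hin, lintegral_zero, Set.indicator_of_notMem ha]
    rw [lintegral_congr hout, lintegral_indicator measurableSet_Ioo,
      lint_Ioo x hx n c hc0]
    congr 1
    rw [hc, pow_succ]
    field_simp
    ring

end ZetaIterAux

open ZetaIterAux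

/-- **`ζ(s)` as an iterated integral.** For an integer `s ≥ 2`,
`ζ(s) = ∫_{1 > t₁ > … > t_s > 0} (dt₁/t₁)⋯(dt_{s-1}/t_{s-1}) (dt_s/(1-t_s))`. -/
theorem zeta_eq_iterated_integral (s : ℕ) (hs : 2 ≤ s) :
    (∫ t in {t : Fin s → ℝ | (∀ i, 0 < t i) ∧ (∀ i, t i < 1) ∧
        (∀ i j : Fin s, i < j → t j < t i)},
      (∏ i ∈ Finset.univ.erase (⟨s - 1, by omega⟩ : Fin s), (t i)⁻¹) *
        (1 - t ⟨s - 1, by omega⟩)⁻¹) =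
    ∑' n : ℕ+, (1 : ℝ) / (n : ℝ) ^ s := by
  obtain ⟨k, rfl⟩ : ∃ k, s = k + 2 := ⟨s - 2, by omega⟩
  have hidx : (⟨k + 2 - 1, by omega⟩ : Fin (k + 2)) = Fin.last (k + 1) := rfl
  set c : Fin (k + 2) := Fin.last (k + 1) with hcdef
  have hset : {t : Fin (k + 2) → ℝ | (∀ i, 0 < t i) ∧ (∀ i, t i < 1) ∧
      (∀ i j : Fin (k + 2), i < j → t j < t i)} = S (k + 2) 1 := by
    ext t; simp only [S, Set.mem_setOf_eq]; tauto
  rw [hidx, hset]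
  set f : (Fin (k + 2) → ℝ) → ℝ := fun t =>
    (∏ i ∈ Finset.univ.erase c, (t i)⁻¹) * (1 - t c)⁻¹ with hf
  have hfmeas : Measurable f := by
    exact (Finset.measurable_prod _ fun i _ => (measurable_pi_apply i).inv).mul
      ((measurable_const.sub (measurable_pi_apply c)).inv)
  have hS := measurableSet_S (k + 2) 1
  -- convert to lintegral
  rw [MeasureTheory.integral_eq_lintegral_of_nonneg_ae
    (ae_restrict_of_forall_mem hS fun t ht => ?nonneg)
    hfmeas.aestronglyMeasurable]
  case nonneg =>
    obtain ⟨hpos, _, hlt⟩ := ht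
    have : (0 : ℝ) < 1 - t c := by linarith [hlt c]
    exact mul_nonneg (Finset.prod_nonneg fun i _ => inv_nonneg.mpr (hpos i).le)
      (inv_nonneg.mpr this.le)
  -- expand into geometric series pointwise on the set
  have hpt : ∀ t ∈ S (k + 2) 1, ENNReal.ofReal (f t) =
      ∑' n : ℕ, ENNReal.ofReal ((∏ i, (t i)⁻¹) * t c ^ (n + 1)) := by
    intro t ht
    obtain ⟨hpos, _, hlt⟩ := ht
    have htc0 : 0 < t c := hpos c
    have htc1 : t c < 1 := hlt c
    have hprodnn : 0 ≤ ∏ i, (t i)⁻¹ :=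
      Finset.prod_nonneg fun i _ => inv_nonneg.mpr (hpos i).le
    have hprod : (∏ i ∈ Finset.univ.erase c, (t i)⁻¹) = (∏ i, (t i)⁻¹) * t c := by
      rw [← Finset.prod_erase_mul Finset.univ _ (Finset.mem_univ c)]
      rw [mul_assoc, inv_mul_cancel₀ (ne_of_gt htc0), mul_one]
    have hfval : f t = ∑' n : ℕ, (∏ i, (t i)⁻¹) * t c ^ (n + 1) := by
      have : ∀ n : ℕ, (∏ i, (t i)⁻¹) * t c ^ (n + 1) =
          ((∏ i, (t i)⁻¹) * t c) * t c ^ n := fun n => by ring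
      rw [funext this, tsum_mul_left, tsum_geometric_of_lt_one htc0.le htc1]
      simp only [hf, hprod]
    rw [hfval, ENNReal.ofReal_tsum_of_nonneg]
    · intro n
      exact mul_nonneg hprodnn (pow_nonneg htc0.le _)
    · exact ((summable_geometric_of_lt_one htc0.le htc1).mul_left
        ((∏ i, (t i)⁻¹) * t c)).congr fun n => by ring
  rw [setLIntegral_congr_fun hS
    (fun t ht => hpt t ht)]
  rw [lintegral_tsum fun n => ((measurable_integrand (k + 2) c n).aemeasurable)]
  have hval : ∀ n : ℕ,
      (∫⁻ t in S (k + 2) 1, ENNReal.ofReal ((∏ i, (t i)⁻¹) * t c ^ (n + 1))) =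
        ENNReal.ofReal (1 / ((n : ℝ) + 1) ^ (k + 2)) := by
    intro n
    rw [hcdef, key (k + 1) 1 one_pos n]
    norm_num
  rw [tsum_congr hval]
  have hsummable : Summable fun n : ℕ => 1 / ((n : ℝ) + 1) ^ (k + 2) := by
    have h := Real.summable_one_div_nat_pow.mpr (show 1 < k + 2 by omega)
    have := (summable_nat_add_iff 1).mpr h
    refine this.congr fun n => ?_
    push_cast
    ring
  rw [← ENNReal.ofReal_tsum_of_nonneg (fun n => by positivity) hsummable,
    ENNReal.toReal_ofReal (tsum_nonneg fun n => by positivity)]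
  rw [← Equiv.tsum_eq Equiv.pnatEquivNat.symm (fun p : ℕ+ => (1 : ℝ) / (p : ℝ) ^ (k + 2))]
  refine tsum_congr fun n => ?_
  have : ((Equiv.pnatEquivNat.symm n : ℕ+) : ℝ) = (n : ℝ) + 1 := by
    simp [Equiv.pnatEquivNat, Nat.succPNat]
  rw [this]
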